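/- Let (M, d) be a connected separable metric space and μ a Borel measure on M which is positive on every nonempty open ball and finite on every open ball. Let S ⊆ M be a Borel set with μ(S) > 0, and suppose there exists ε > 0 such that for μ-almost every x ∈ S one has μ(B(x, ε) \ S) = 0, where B(x, ε) is the open ball of radius ε around x. Then μ(M \ S) = 0. -/

import Mathlib

open MeasureTheory

/-- The concluding step of the Hopf argument: on a connected separable
metric space with a Borel measure that is positive and finite on open balls, a Borel set `S`
of positive measure which essentially contains the ball `B(x, ε)` around μ-almost every of
its points (for a uniform `ε > 0`) must have full measure. -/
theorem hopf_argument_full_measure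
    {M : Type*} [MetricSpace M] [ConnectedSpace M] [TopologicalSpace.SeparableSpace M]
    [MeasurableSpace M] [BorelSpace M] (μ : Measure M)
    (hpos : ∀ (x : M) (r : ℝ), 0 < r → 0 < μ (Metric.ball x r))
    (hfin : ∀ (x : M) (r : ℝ), μ (Metric.ball x r) < ⊤)
    (S : Set M) (hS : MeasurableSet S) (hSpos : 0 < μ S)
    (ε : ℝ) (hε : 0 < ε)
    (hfull : ∀ᵐ x ∂μ, x ∈ S → μ (Metric.ball x ε \ S) = 0) :
    μ Sᶜ = 0 := by
  set T : Set M := {x | x ∈ S → μ (Metric.ball x ε \ S) = 0} with hT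
  have hTc : μ Tᶜ = 0 := by
    rw [MeasureTheory.ae_iff] at hfull
    convert hfull using 2
    rfl
  -- V : points with a small null-deficiency ball
  set V : Set M := {x | ∃ r : ℝ, 0 < r ∧ μ (Metric.ball x r \ S) = 0} with hV
  -- nonempty witness helper: any set of positive measure meets S ∩ T when it's a.e. in S
  have hST : ∀ (y : M) (r : ℝ), 0 < r → μ (Metric.ball y r \ S) = 0 →
      ∃ z, z ∈ Metric.ball y r ∧ z ∈ S ∧ μ (Metric.ball z ε \ S) = 0 := by
    intro y r hr hnull
    by_contra hcon
    push_neg at hcon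
    have hsub : Metric.ball y r ⊆ (Metric.ball y r \ S) ∪ Tᶜ := by
      intro z hz
      by_cases hzS : z ∈ S
      · right
        intro hzT
        exact hcon z hz hzS (hzT hzS)
      · exact Or.inl ⟨hz, hzS⟩
    have h2 : μ ((Metric.ball y r \ S) ∪ Tᶜ) ≤ μ (Metric.ball y r \ S) + μ Tᶜ :=
      measure_union_le _ _
    have := (measure_mono hsub).trans h2
    rw [hnull, hTc, add_zero] at this
    exact absurd (le_antisymm this bot_le) (hpos y r hr).ne'
  -- every point of the closure of V has null ball-deficiency at radius ε/2
  have hkey : ∀ x ∈ closure V, μ (Metric.ball x (ε / 2) \ S) = 0 := by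
    intro x hx
    rcases Metric.mem_closure_iff.1 hx (ε / 4) (by linarith) with ⟨y, hyV, hxy⟩
    rcases hyV with ⟨r, hr0, hnull⟩
    rcases hST y (min r (ε / 4)) (lt_min hr0 (by linarith))
        (le_antisymm ((measure_mono (Set.diff_subset_diff_left
          (Metric.ball_subset_ball (min_le_left _ _)))).trans hnull.le) bot_le)
      with ⟨z, hzball, hzS, hznull⟩
    have hxz : dist x z < ε / 2 := by
      rw [Metric.mem_ball] at hzball
      have h1 : dist y z < ε / 4 := by
        rw [dist_comm]
        exact lt_of_lt_of_le hzball (min_le_right r (ε / 4))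
      calc dist x z ≤ dist x y + dist y z := dist_triangle x y z
        _ < ε / 4 + ε / 4 := add_lt_add hxy h1
        _ = ε / 2 := by ring
    have hsub : Metric.ball x (ε / 2) ⊆ Metric.ball z ε := by
      intro w hw
      rw [Metric.mem_ball] at hw ⊢
      calc dist w z ≤ dist w x + dist x z := dist_triangle w x z
        _ < ε / 2 + ε / 2 := add_lt_add hw hxz
        _ = ε := by ring
    exact le_antisymm ((measure_mono (Set.diff_subset_diff_left hsub)).trans
      hznull.le) bot_le
  -- V is open
  have hopen : IsOpen V := by
    rw [Metric.isOpen_iff]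
    rintro x ⟨r, hr0, hnull⟩
    refine ⟨r / 2, by linarith, fun y hy => ⟨r / 2, by linarith, ?_⟩⟩
    have : Metric.ball y (r / 2) ⊆ Metric.ball x r := by
      apply Metric.ball_subset_ball'
      rw [Metric.mem_ball] at hy
      linarith
    exact le_antisymm ((measure_mono (Set.diff_subset_diff_left this)).trans
      hnull.le) bot_le
  -- V is closed
  have hclosed : IsClosed V := by
    rw [← closure_subset_iff_isClosed]
    intro x hx
    exact ⟨ε / 2, by linarith, hkey x hx⟩
  -- V is nonempty
  have hne : V.Nonempty := by
    by_contra hcon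
    rw [Set.not_nonempty_iff_eq_empty] at hcon
    have hsub : S ⊆ Tᶜ := by
      intro z hzS hzT
      have : z ∈ V := ⟨ε, hε, hzT hzS⟩
      rw [hcon] at this
      exact this
    exact absurd (le_antisymm ((measure_mono hsub).trans hTc.le) bot_le) hSpos.ne'
  -- connectedness: V = univ
  have huniv : V = Set.univ := IsClopen.eq_univ ⟨hclosed, hopen⟩ hne
  -- conclude with a countable cover
  obtain ⟨D, hDcount, hDdense⟩ := TopologicalSpace.exists_countable_dense M
  have hcover : Sᶜ ⊆ ⋃ c ∈ D, (Metric.ball c (ε / 2) \ S) := by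
    intro x hxS
    rcases Metric.mem_closure_iff.1 (hDdense x) (ε / 2) (by linarith) with ⟨c, hcD, hxc⟩
    refine Set.mem_biUnion hcD ⟨?_, hxS⟩
    rwa [Metric.mem_ball]
  have hz : μ (⋃ c ∈ D, (Metric.ball c (ε / 2) \ S)) = 0 := by
    rw [measure_biUnion_null_iff hDcount]
    intro c _
    exact hkey c (by rw [huniv, closure_univ]; trivial)
  exact le_antisymm (hz ▸ measure_mono hcover) bot_le
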